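/- If G is a finite forest (contains no cycle), then col_r(G) ≤ 2 for every r ≥ 1. -/

import Mathlib

open SimpleGraph

variable {V : Type} [Fintype V]

def WReach (G : SimpleGraph V) (L : LinearOrder V) (r : ℕ) (v : V) : Set V :=
  {u | ∃ p : G.Walk v u, p.IsPath ∧ p.length ≤ r ∧ ∀ w ∈ p.support, L.le u w}

def SReach (G : SimpleGraph V) (L : LinearOrder V) (r : ℕ) (v : V) : Set V :=
  {u | ∃ p : G.Walk v u, p.IsPath ∧ p.length ≤ r ∧ L.le u v ∧
    ∀ w ∈ p.support, w ≠ u → w ≠ v → L.lt v w}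

noncomputable def wcol (G : SimpleGraph V) (r : ℕ) : ℕ :=
  sInf {k | ∃ L : LinearOrder V, ∀ v, (WReach G L r v).ncard ≤ k}

noncomputable def col (G : SimpleGraph V) (r : ℕ) : ℕ :=
  sInf {k | ∃ L : LinearOrder V, ∀ v, (SReach G L r v).ncard ≤ k}

section Aux

variable (G : SimpleGraph V)

/-- A root for the component of `v`. -/
noncomputable def rt (v : V) : V := (G.connectedComponentMk v).out

lemma rt_eq_of_reachable {a b : V} (h : G.Reachable a b) : rt G a = rt G b := by
  unfold rt
  rw [ConnectedComponent.sound h]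

lemma reachable_rt (v : V) : G.Reachable v (rt G v) := by
  have : G.connectedComponentMk v = G.connectedComponentMk (rt G v) :=
    (Quot.out_eq (G.connectedComponentMk v)).symm
  exact (ConnectedComponent.exact this)

/-- Depth of `v`: distance to the root of its component. -/
noncomputable def dep (v : V) : ℕ := G.dist v (rt G v)

lemma dep_le_of_mem_support {a w : V} (P : G.Walk a (rt G a)) (hw : w ∈ P.support) :
    dep G w ≤ P.length := by
  classical
  have hreach : G.Reachable a w := ⟨P.takeUntil w hw⟩
  have hrt : rt G w = rt G a := (rt_eq_of_reachable G hreach).symm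
  have h1 : G.dist w (rt G a) ≤ (P.dropUntil w hw).length := dist_le _
  have h2 : (P.dropUntil w hw).length ≤ P.length := Walk.length_dropUntil_le P hw
  calc dep G w = G.dist w (rt G a) := by rw [dep, hrt]
    _ ≤ P.length := h1.trans h2

lemma adj_dep (hG : G.IsAcyclic) {a b : V} (hab : G.Adj a b) :
    dep G b = dep G a + 1 ∨ dep G a = dep G b + 1 := by
  classical
  have hrt : rt G a = rt G b := rt_eq_of_reachable G hab.reachable
  obtain ⟨P, hPp, hPl⟩ := (reachable_rt G a).exists_path_of_dist
  obtain ⟨Q, hQp, hQl⟩ := (reachable_rt G b).exists_path_of_dist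
  -- dep a ≤ dep b + 1
  have h1 : dep G a ≤ dep G b + 1 := by
    have := dist_le (Walk.cons hab (Q.copy rfl hrt.symm))
    simpa [dep, Walk.length_copy, hQl] using this
  have h2 : dep G b ≤ dep G a + 1 := by
    have := dist_le (Walk.cons hab.symm (P.copy rfl hrt))
    simpa [dep, Walk.length_copy, hPl] using this
  have hne : dep G a ≠ dep G b := by
    intro heq
    by_cases hmem : a ∈ Q.support
    · have hd : dep G a ≤ (Q.dropUntil a hmem).length := by
        have hreach : rt G a = rt G b := hrt
        have : G.dist a (rt G b) ≤ (Q.dropUntil a hmem).length := dist_le _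
        simpa [dep, hreach] using this
      have ht : (Q.takeUntil a hmem).length + (Q.dropUntil a hmem).length = Q.length := by
        have h0 := congrArg Walk.length (Q.take_spec hmem)
        rw [Walk.length_append] at h0
        exact h0
      have hQlen : Q.length = dep G b := hQl
      have hdep : dep G a = dep G b := heq
      have htne : (Q.takeUntil a hmem).length ≠ 0 := by
        intro h0
        exact hab.ne' (Walk.eq_of_length_eq_zero h0)
      omega
    · have hWp : (Walk.cons hab (Q.copy rfl hrt.symm)).IsPath := by
        rw [Walk.cons_isPath_iff]
        constructor
        · exact (Walk.isPath_copy _ _ _).mpr hQp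
        · simpa [Walk.support_copy] using hmem
      have := hG.path_unique ⟨P, hPp⟩ ⟨Walk.cons hab (Q.copy rfl hrt.symm), hWp⟩
      have hlen := congrArg (fun p : G.Path a (rt G a) => (p : G.Walk a (rt G a)).length) this
      simp only [Walk.length_cons, Walk.length_copy] at hlen
      rw [hPl, hQl] at hlen
      simp only [dep] at heq
      omega
  omega

lemma parent_unique (hG : G.IsAcyclic) {v a b : V} (hva : G.Adj v a) (hvb : G.Adj v b)
    (ha : dep G a + 1 = dep G v) (hb : dep G b + 1 = dep G v) : a = b := by
  classical
  obtain ⟨Pa, hPap, hPal⟩ := (reachable_rt G a).exists_path_of_dist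
  obtain ⟨Pb, hPbp, hPbl⟩ := (reachable_rt G b).exists_path_of_dist
  have hrta : rt G a = rt G v := rt_eq_of_reachable G hva.symm.reachable
  have hrtb : rt G b = rt G v := rt_eq_of_reachable G hvb.symm.reachable
  have hva' : v ∉ Pa.support := by
    intro hmem
    have := dep_le_of_mem_support G Pa hmem
    rw [hPal] at this
    have : dep G v ≤ dep G a := this
    omega
  have hvb' : v ∉ Pb.support := by
    intro hmem
    have := dep_le_of_mem_support G Pb hmem
    rw [hPbl] at this
    have : dep G v ≤ dep G b := this
    omega
  have hWa : (Walk.cons hva (Pa.copy rfl hrta)).IsPath := by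
    rw [Walk.cons_isPath_iff]
    exact ⟨(Walk.isPath_copy _ _ _).mpr hPap, by simpa [Walk.support_copy] using hva'⟩
  have hWb : (Walk.cons hvb (Pb.copy rfl hrtb)).IsPath := by
    rw [Walk.cons_isPath_iff]
    exact ⟨(Walk.isPath_copy _ _ _).mpr hPbp, by simpa [Walk.support_copy] using hvb'⟩
  have heq := hG.path_unique ⟨Walk.cons hva (Pa.copy rfl hrta), hWa⟩
    ⟨Walk.cons hvb (Pb.copy rfl hrtb), hWb⟩
  have := congrArg (fun p : G.Path v (rt G v) => (p : G.Walk v (rt G v)).getVert 1) heq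
  simpa [Walk.getVert_cons_succ] using this

lemma dep_mono (hG : G.IsAcyclic) :
    ∀ {a u : V} (p : G.Walk a u), p.IsPath → ∀ b, G.Adj b a → dep G a = dep G b + 1 →
      b ∉ p.support → ∀ w ∈ p.support, dep G b < dep G w := by
  intro a u p
  induction p with
  | nil =>
    intro _ b _ hd _ w hw
    simp only [Walk.support_nil, List.mem_singleton] at hw
    subst hw
    omega
  | @cons a c u h q ih =>
    intro hp b hba hd hb w hw
    rw [Walk.cons_isPath_iff] at hp
    rw [Walk.support_cons, List.mem_cons] at hw
    rw [Walk.support_cons, List.mem_cons] at hb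
    push_neg at hb
    rcases hw with rfl | hw
    · omega
    · rcases adj_dep G hG h with h1 | h2
      · have hstep : dep G b < dep G a := by omega
        have := ih hp.1 a h (by omega) hp.2 w hw
        omega
      · -- both b and c are parents of a, so b = c, contradiction with b ∉ support
        have : b = c := parent_unique G hG hba.symm h (by omega) (by omega)
        subst this
        exact absurd (Walk.start_mem_support q) hb.2

/-- A linear order refining depth. -/
noncomputable def myL : LinearOrder V :=
  LinearOrder.lift' (fun v => toLex (dep G v, (Fintype.equivFin V v : ℕ)))
    (by
      intro x y hxy
      have h2 := congrArg (fun p => (ofLex p).2) hxy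
      simp only [ofLex_toLex] at h2
      exact (Fintype.equivFin V).injective (Fin.val_injective h2))

lemma myL_lt {u v : V} (h : dep G u < dep G v) : (myL G).lt u v := by
  show toLex (dep G u, ((Fintype.equivFin V u : ℕ))) < toLex (dep G v, ((Fintype.equivFin V v : ℕ)))
  exact Prod.Lex.left _ _ h

lemma myL_not_le {u v : V} (h : dep G u < dep G v) : ¬ (myL G).le v u := by
  have hlt := myL_lt G h
  exact (((myL G).lt_iff_le_not_ge _ _).mp hlt).2

lemma key (hG : G.IsAcyclic) {v u : V} (p : G.Walk v u) (hp : p.IsPath)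
    (hle : (myL G).le u v)
    (hint : ∀ w ∈ p.support, w ≠ u → w ≠ v → (myL G).lt v w) :
    u = v ∨ (G.Adj v u ∧ dep G u + 1 = dep G v) := by
  cases p with
  | nil => exact Or.inl rfl
  | @cons _ c _ h q =>
    rw [Walk.cons_isPath_iff] at hp
    rcases adj_dep G hG h with h1 | h2
    · exfalso
      have := dep_mono G hG q hp.1 v h h1 hp.2 u (Walk.end_mem_support q)
      exact myL_not_le G this hle
    · cases q with
      | nil => exact Or.inr ⟨h, by omega⟩
      | @cons _ d _ h' q' =>
        exfalso
        have hcu : c ≠ u := by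
          intro hcu
          subst hcu
          have hnd := hp.1.support_nodup
          rw [Walk.support_cons, List.nodup_cons] at hnd
          exact hnd.1 (Walk.end_mem_support q')
        have hcv : c ≠ v := h.ne'
        have hmem : c ∈ (Walk.cons h (Walk.cons h' q')).support := by
          rw [Walk.support_cons]
          exact List.mem_cons_of_mem _ (Walk.start_mem_support _)
        have hltvc := hint c hmem hcu hcv
        have hltcv : (myL G).lt c v := myL_lt G (by omega)
        have := (((myL G).lt_iff_le_not_ge _ _).mp hltvc).2
        exact this ((((myL G).lt_iff_le_not_ge _ _).mp hltcv).1)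

end Aux

theorem col_le_two_of_acyclic (G : SimpleGraph V) (hG : G.IsAcyclic) (r : ℕ) (hr : 1 ≤ r) :
    col G r ≤ 2 := by
  apply Nat.sInf_le
  refine ⟨myL G, fun v => ?_⟩
  by_cases hex : ∃ y, G.Adj v y ∧ dep G y + 1 = dep G v
  · have hsub : SReach G (myL G) r v ⊆ {v, hex.choose} := by
      intro u hu
      obtain ⟨p, hp, _, hle, hint⟩ := hu
      rcases key G hG p hp hle hint with h | ⟨hadj, hdep⟩
      · exact Or.inl h
      · right
        exact parent_unique G hG hadj hex.choose_spec.1 hdep hex.choose_spec.2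
    calc (SReach G (myL G) r v).ncard ≤ ({v, hex.choose} : Set V).ncard :=
          Set.ncard_le_ncard hsub (Set.toFinite _)
      _ ≤ ({hex.choose} : Set V).ncard + 1 := Set.ncard_insert_le _ _
      _ ≤ 2 := by simp [Set.ncard_singleton]
  · have hsub : SReach G (myL G) r v ⊆ {v} := by
      intro u hu
      obtain ⟨p, hp, _, hle, hint⟩ := hu
      rcases key G hG p hp hle hint with h | ⟨hadj, hdep⟩
      · exact h
      · exact absurd ⟨u, hadj, hdep⟩ hex
    calc (SReach G (myL G) r v).ncard ≤ ({v} : Set V).ncard :=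
          Set.ncard_le_ncard hsub (Set.toFinite _)
      _ ≤ 2 := by simp [Set.ncard_singleton]
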